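/- arXiv:0711.4759 — 4 statements merged into one kernel-verified Lean document; each statement's English description precedes it below -/
import Mathlib

section
/- For each positive integer n and each rational α with 0 ≤ α ≤ 1, there exists an election Pad_n = (C,V) with exactly 2n+1 candidates such that every candidate c ∈ C has Copeland^α score exactly n. -/
/-- A voter's preference: a strict linear order over candidates `C`,
represented by a Boolean relation `pref` (`pref a b` = voter strictly prefers `a` to `b`). -/
structure Vote (C : Type) where
  pref : C → C → Bool
  asymm : ∀ a b : C, a ≠ b → pref a b = !pref b a
  irrefl : ∀ a : C, pref a a = false
  trans : ∀ a b c : C, pref a b = true → pref b c = true → pref a c = true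

/-- Number of voters in `V` preferring `c` to `d`. -/
def countPref {C : Type} (V : List (Vote C)) (c d : C) : ℕ :=
  V.countP (fun v => v.pref c d)

/-- Copeland^α points `c` obtains from the head-to-head contest with `d`:
`1` for a strict-majority win, `α` for a tie, `0` for a loss. -/
def points {C : Type} (α : ℚ) (V : List (Vote C)) (c d : C) : ℚ :=
  if countPref V d c < countPref V c d then 1
  else if countPref V c d = countPref V d c then α
  else 0

/-- Copeland^α score of `c` within candidate set `S`. -/
def score {C : Type} [DecidableEq C] (α : ℚ) (S : Finset C) (V : List (Vote C)) (c : C) : ℚ :=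
  ∑ d ∈ S.erase c, points α V c d

/-- `p` is a Copeland^α winner of the election with candidate set `S` and voters `V`. -/
def IsWinner {C : Type} [DecidableEq C] (α : ℚ) (S : Finset C) (V : List (Vote C)) (p : C) : Prop :=
  p ∈ S ∧ ∀ c ∈ S, score α S V c ≤ score α S V p

/- auxiliary development -/

lemma Pad_mod2 (m x : ℕ) (h : x < 2 * m) : x % m = if x < m then x else x - m := by
  split_ifs with h1
  · exact Nat.mod_eq_of_lt h1
  · rw [Nat.mod_eq_sub_mod (by omega)]
    exact Nat.mod_eq_of_lt (by omega)

def Pad_fv (m : ℕ) (j a : Fin m) : ℕ := (a.val + (m - j.val)) % m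

lemma Pad_fv_lt (m : ℕ) (hm : 0 < m) (j a : Fin m) : Pad_fv m j a < m :=
  Nat.mod_lt _ hm

lemma Pad_fv_inj (m : ℕ) (j : Fin m) : Function.Injective (Pad_fv m j) := by
  intro a b h
  have ha := a.isLt; have hb := b.isLt; have hj := j.isLt
  simp only [Pad_fv] at h
  rw [Pad_mod2 m _ (by omega), Pad_mod2 m _ (by omega)] at h
  apply Fin.ext
  split_ifs at h <;> omega

lemma Pad_fv_inj_j (m : ℕ) (c : Fin m) :
    Function.Injective (fun j => Pad_fv m j c) := by
  intro j j' h
  have hc := c.isLt; have hj := j.isLt; have hj' := j'.isLt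
  simp only [Pad_fv] at h
  rw [Pad_mod2 m _ (by omega), Pad_mod2 m _ (by omega)] at h
  apply Fin.ext
  split_ifs at h <;> omega

lemma Pad_tval_pos (m : ℕ) (hm : 0 < m) (c d : Fin m) (hcd : c ≠ d) :
    0 < (d.val + (m - c.val)) % m := by
  have hc := c.isLt; have hd := d.isLt
  have hne : d.val ≠ c.val := fun h => hcd (Fin.ext h).symm
  rw [Pad_mod2 m _ (by omega)]
  split_ifs <;> omega

lemma Pad_tval_lt (m : ℕ) (hm : 0 < m) (c d : Fin m) :
    (d.val + (m - c.val)) % m < m := Nat.mod_lt _ hm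

lemma Pad_tval_add (m : ℕ) (hm : 0 < m) (c d : Fin m) (hcd : c ≠ d) :
    (d.val + (m - c.val)) % m + (c.val + (m - d.val)) % m = m := by
  have hc := c.isLt; have hd := d.isLt
  have hne : d.val ≠ c.val := fun h => hcd (Fin.ext h).symm
  rw [Pad_mod2 m _ (by omega), Pad_mod2 m _ (by omega)]
  split_ifs <;> omega

lemma Pad_fv_d (m : ℕ) (hm : 0 < m) (j c d : Fin m) :
    Pad_fv m j d = (Pad_fv m j c + (d.val + (m - c.val)) % m) % m := by
  have hc := c.isLt; have hd := d.isLt; have hj := j.isLt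
  simp only [Pad_fv]
  rw [← Nat.add_mod]
  have harg : c.val + (m - j.val) + (d.val + (m - c.val)) = d.val + (m - j.val) + m := by omega
  rw [harg, Nat.add_mod_right]

lemma Pad_fv_lt_iff (m : ℕ) (hm : 0 < m) (j c d : Fin m) (hcd : c ≠ d) :
    (Pad_fv m j c < Pad_fv m j d ↔ Pad_fv m j c < m - (d.val + (m - c.val)) % m) := by
  set t := (d.val + (m - c.val)) % m with ht
  have h1 : 0 < t := Pad_tval_pos m hm c d hcd
  have h2 : t < m := Pad_tval_lt m hm c d
  have h3 : Pad_fv m j c < m := Pad_fv_lt m hm j c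
  have h4 : Pad_fv m j d = (Pad_fv m j c + t) % m := Pad_fv_d m hm j c d
  rw [h4, Pad_mod2 m _ (by omega)]
  split_ifs <;> omega

def Pad_mkVote (m : ℕ) (j : Fin m) : Vote (Fin m) where
  pref a b := decide (Pad_fv m j a < Pad_fv m j b)
  asymm a b hab := by
    have hne : Pad_fv m j a ≠ Pad_fv m j b := fun h => hab (Pad_fv_inj m j h)
    rcases lt_trichotomy (Pad_fv m j a) (Pad_fv m j b) with h | h | h
    · have h' : ¬ Pad_fv m j b < Pad_fv m j a := by omega
      simp [h, h']
    · exact absurd h hne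
    · have h' : ¬ Pad_fv m j a < Pad_fv m j b := by omega
      simp [h, h']
  irrefl a := by simp
  trans a b c h1 h2 := by
    simp only [decide_eq_true_eq] at *
    omega

lemma Pad_countP (m : ℕ) (p : Fin m → Prop) [DecidablePred p] :
    ((List.finRange m).countP fun j => decide (p j)) = (Finset.univ.filter p).card := by
  rw [Fin.univ_def, List.countP_eq_length_filter]
  rfl

lemma Pad_card_val_lt (m k : ℕ) (h : k ≤ m) :
    (Finset.univ.filter fun x : Fin m => x.val < k).card = k := by
  rw [← Finset.card_range k]
  apply Finset.card_bij (fun x _ => x.val)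
  · intro a ha; simp_all [Finset.mem_range]
  · intro a _ b _ hab; exact Fin.ext hab
  · intro b hb; simp only [Finset.mem_range] at hb
    exact ⟨⟨b, lt_of_lt_of_le hb h⟩, by simp [hb], rfl⟩

lemma Pad_card_fv (m : ℕ) (hm : 0 < m) (c : Fin m) (k : ℕ) (hk : k ≤ m) :
    (Finset.univ.filter fun j : Fin m => Pad_fv m j c < k).card = k := by
  have hginj : Function.Injective (fun j : Fin m => (⟨Pad_fv m j c, Pad_fv_lt m hm j c⟩ : Fin m)) := by
    intro j j' h
    exact Pad_fv_inj_j m c (congrArg Fin.val h)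
  have hgsurj := Finite.injective_iff_surjective.mp hginj
  have key : (Finset.univ.filter fun j : Fin m => Pad_fv m j c < k).card
      = (Finset.univ.filter fun x : Fin m => x.val < k).card := by
    apply Finset.card_bij (fun j _ => (⟨Pad_fv m j c, Pad_fv_lt m hm j c⟩ : Fin m))
    · intro a ha; simp_all [Finset.mem_filter]
    · intro a _ b _ hab; exact hginj hab
    · intro b hb
      obtain ⟨j, hj⟩ := hgsurj b
      refine ⟨j, ?_, hj⟩
      simp only [Finset.mem_filter, Finset.mem_univ, true_and] at hb ⊢
      rw [← hj] at hb
      exact hb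
  rw [key, Pad_card_val_lt m k hk]

lemma Pad_count (m : ℕ) (hm : 0 < m) (c d : Fin m) (hcd : c ≠ d) :
    countPref ((List.finRange m).map (Pad_mkVote m)) c d
      = m - (d.val + (m - c.val)) % m := by
  set t := (d.val + (m - c.val)) % m with ht
  have h2 : t < m := Pad_tval_lt m hm c d
  unfold countPref
  rw [List.countP_map]
  have heq : ((fun v : Vote (Fin m) => v.pref c d) ∘ Pad_mkVote m)
      = fun j => decide (Pad_fv m j c < Pad_fv m j d) := rfl
  rw [heq, Pad_countP m (fun j => Pad_fv m j c < Pad_fv m j d)]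
  rw [Finset.filter_congr (fun j _ => by
    simpa using Pad_fv_lt_iff m hm j c d hcd)]
  exact Pad_card_fv m hm c (m - t) (by omega)


/-- for each positive `n` and rational `α ∈ [0,1]`, there is an election
with exactly `2n+1` candidates in which every candidate has Copeland^α score exactly `n`. -/
theorem pad_election_exists (n : ℕ) (hn : 0 < n) (α : ℚ) (h0 : 0 ≤ α) (h1 : α ≤ 1) :
    ∃ V : List (Vote (Fin (2 * n + 1))),
      ∀ c : Fin (2 * n + 1), score α Finset.univ V c = (n : ℚ) := by
  set m := 2 * n + 1 with hmdef
  have hm : 0 < m := by omega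
  refine ⟨(List.finRange m).map (Pad_mkVote m), fun c => ?_⟩
  have hc := c.isLt
  have hpts : ∀ d ∈ Finset.univ.erase c,
      points α ((List.finRange m).map (Pad_mkVote m)) c d
        = if (d.val + (m - c.val)) % m ≤ n then 1 else 0 := by
    intro d hd
    have hdc : d ≠ c := Finset.ne_of_mem_erase hd
    have hcd : c ≠ d := hdc.symm
    set t := (d.val + (m - c.val)) % m with ht
    have h1 : 0 < t := Pad_tval_pos m hm c d hcd
    have h2 : t < m := Pad_tval_lt m hm c d
    have hccd : countPref ((List.finRange m).map (Pad_mkVote m)) c d = m - t :=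
      Pad_count m hm c d hcd
    have hcdc : countPref ((List.finRange m).map (Pad_mkVote m)) d c = t := by
      rw [Pad_count m hm d c hdc]
      have := Pad_tval_add m hm c d hcd
      omega
    unfold points
    rw [hccd, hcdc]
    split_ifs <;> first | rfl | omega
  rw [score, Finset.sum_congr rfl hpts, Finset.sum_boole]
  have hcard : ((Finset.univ.erase c).filter
      fun d : Fin m => (d.val + (m - c.val)) % m ≤ n).card = n := by
    have key : ((Finset.univ.erase c).filter
        fun d : Fin m => (d.val + (m - c.val)) % m ≤ n).card = (Finset.Icc 1 n).card := by
      apply Finset.card_bij (fun d _ => (d.val + (m - c.val)) % m)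
      · intro d hd
        simp only [Finset.mem_filter, Finset.mem_erase] at hd
        have h1 : 0 < (d.val + (m - c.val)) % m := Pad_tval_pos m hm c d hd.1.1.symm
        simp only [Finset.mem_Icc]
        omega
      · intro a ha b hb hab
        have haa := a.isLt; have hbb := b.isLt
        rw [Pad_mod2 m _ (by omega), Pad_mod2 m _ (by omega)] at hab
        apply Fin.ext
        split_ifs at hab <;> omega
      · intro t htmem
        simp only [Finset.mem_Icc] at htmem
        refine ⟨⟨(c.val + t) % m, Nat.mod_lt _ hm⟩, ?_, ?_⟩
        · simp only [Finset.mem_filter, Finset.mem_erase, Finset.mem_univ, and_true, true_and]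
          constructor
          · intro hcontra
            have hval : (c.val + t) % m = c.val := congrArg Fin.val hcontra
            rw [Pad_mod2 m _ (by omega)] at hval
            split_ifs at hval <;> omega
          · rw [Pad_mod2 m ((c.val + t) % m + (m - c.val)) (by
              have := Nat.mod_lt (c.val + t) hm; omega)]
            rw [Pad_mod2 m (c.val + t) (by omega)]
            split_ifs <;> omega
        · rw [Pad_mod2 m ((c.val + t) % m + (m - c.val)) (by
              have := Nat.mod_lt (c.val + t) hm; omega)]
          rw [Pad_mod2 m (c.val + t) (by omega)]
          split_ifs <;> omega
    rw [key, Nat.card_Icc]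
    omega
  rw [hcard]
end

section
/- McGarvey-type realizability: for every finite set C of candidates and every function f assigning to each unordered pair {c,d} ⊆ C one of the outcomes 'c beats d', 'd beats c', or 'tie', there exists a finite list V of strict linear orders over C such that for every pair {c,d}, the head-to-head majority contest in the election (C,V) has outcome f({c,d}). -/
section Aux
variable {C : Type} [Fintype C] [DecidableEq C]

/-- Vote from an injective ranking (smaller rank = more preferred). -/
def mkVote (r : C → ℕ) (hr : Function.Injective r) : Vote C where
  pref a b := decide (r a < r b)
  asymm a b h := by
    have h' : r a ≠ r b := fun he => h (hr he)
    by_cases hl : r a < r b <;> simp [hl] <;> omega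
  irrefl a := by simp
  trans a b c hab hbc := by
    simp only [decide_eq_true_eq] at *; omega

def rank1 (e : C ≃ Fin (Fintype.card C)) (c d a : C) : ℕ :=
  if a = c then 0 else if a = d then 1 else (e a : ℕ) + 2

def rank2 (e : C ≃ Fin (Fintype.card C)) (c d a : C) : ℕ :=
  if a = c then Fintype.card C else if a = d then Fintype.card C + 1
  else Fintype.card C - 1 - (e a : ℕ)

lemma rank1_inj (e : C ≃ Fin (Fintype.card C)) (c d : C) (hcd : c ≠ d) :
    Function.Injective (rank1 e c d) := by
  intro a b h
  have ha := (e a).isLt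
  have hb := (e b).isLt
  simp only [rank1] at h
  split_ifs at h <;>
    first
      | omega
      | (subst_vars; rfl)
      | (exact e.injective (Fin.val_injective (by omega)))

lemma rank2_inj (e : C ≃ Fin (Fintype.card C)) (c d : C) (hcd : c ≠ d) :
    Function.Injective (rank2 e c d) := by
  intro a b h
  have ha := (e a).isLt
  have hb := (e b).isLt
  simp only [rank2] at h
  split_ifs at h <;>
    first
      | omega
      | (subst_vars; rfl)
      | (exact e.injective (Fin.val_injective (by omega)))

/-- The two-voter McGarvey block for the ordered pair `(c,d)`. -/
def block (e : C ≃ Fin (Fintype.card C)) (c d : C) (hcd : c ≠ d) : List (Vote C) :=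
  [mkVote (rank1 e c d) (rank1_inj e c d hcd), mkVote (rank2 e c d) (rank2_inj e c d hcd)]

lemma countPref_block_self (e : C ≃ Fin (Fintype.card C)) (c d : C) (hcd : c ≠ d) :
    countPref (block e c d hcd) c d = 2 := by
  simp [countPref, block, mkVote, rank1, rank2, List.countP_cons, hcd, Ne.symm hcd]

lemma countPref_block_rev (e : C ≃ Fin (Fintype.card C)) (c d : C) (hcd : c ≠ d) :
    countPref (block e c d hcd) d c = 0 := by
  simp [countPref, block, mkVote, rank1, rank2, List.countP_cons, hcd, Ne.symm hcd]

lemma countPref_block_other (e : C ≃ Fin (Fintype.card C)) (c d : C) (hcd : c ≠ d)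
    (a b : C) (hab : a ≠ b) (h1 : ¬(a = c ∧ b = d)) (h2 : ¬(a = d ∧ b = c)) :
    countPref (block e c d hcd) a b = 1 := by
  have ha := (e a).isLt
  have hb := (e b).isLt
  have hcard : 0 < Fintype.card C := Fintype.card_pos_iff.mpr ⟨a⟩
  have hab' : (e a : ℕ) ≠ (e b : ℕ) := by
    intro h; exact hab (e.injective (Fin.val_injective h))
  simp only [countPref, block, List.countP_cons, List.countP_nil, mkVote, rank1, rank2]
  by_cases g1 : a = c <;> by_cases g2 : b = c <;> by_cases g3 : a = d <;> by_cases g4 : b = d <;>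
    simp_all <;>
    first
      | omega
      | (split_ifs <;> simp_all <;> omega)

lemma countPref_flatten_replicate (L : List (Vote C)) (k : ℕ) (a b : C) :
    countPref (List.flatten (List.replicate k L)) a b = k * countPref L a b := by
  induction k with
  | zero => simp [countPref]
  | succ n ih =>
      simp only [List.replicate_succ, List.flatten_cons, countPref, List.countP_append] at *
      rw [ih]; ring

lemma countPref_flatMap {β : Type} (L : List β) (g : β → List (Vote C)) (a b : C) :
    countPref (L.flatMap g) a b = (L.map (fun x => countPref (g x) a b)).sum := by
  induction L with
  | nil => simp [countPref]
  | cons x xs ih =>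
      simp only [List.flatMap_cons, List.map_cons, List.sum_cons, countPref,
        List.countP_append] at *
      rw [ih]

end Aux

/-- McGarvey-type realizability: any desired pattern of pairwise majority
outcomes, encoded by a skew-symmetric sign function `f` (`f c d > 0`: `c` is to beat `d`;
`f c d = 0`: `c` and `d` are to tie), is realizable by a finite list of strict linear orders. -/
theorem mcgarvey_realizability {C : Type} [Fintype C] [DecidableEq C]
    (f : C → C → ℤ) (hskew : ∀ c d : C, f c d = -f d c) :
    ∃ V : List (Vote C), ∀ c d : C, c ≠ d →
      (0 < f c d → countPref V d c < countPref V c d) ∧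
      (f c d = 0 → countPref V c d = countPref V d c) ∧
      (f c d < 0 → countPref V c d < countPref V d c) := by
  classical
  set e := Fintype.equivFin C with he
  let blk : C × C → List (Vote C) := fun p =>
    if h : p.1 = p.2 then []
    else List.flatten (List.replicate (f p.1 p.2).toNat (block e p.1 p.2 h))
  set V : List (Vote C) := (Finset.univ : Finset (C × C)).toList.flatMap blk with hV
  refine ⟨V, ?_⟩
  have key : ∀ x y : C,
      countPref V x y
        = ∑ p : C × C, (if h : p.1 = p.2 then 0
            else (f p.1 p.2).toNat * countPref (block e p.1 p.2 h) x y) := by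
    intro x y
    rw [hV, countPref_flatMap, Finset.sum_map_toList]
    refine Finset.sum_congr rfl (fun p _ => ?_)
    by_cases h : p.1 = p.2
    · simp [blk, h, countPref]
    · simp only [blk, h, dif_neg, not_false_iff]
      rw [countPref_flatten_replicate]
  intro a b hab
  have hdiff : (countPref V a b : ℤ) - countPref V b a
      = 2 * (f a b).toNat - 2 * (f b a).toNat := by
    rw [key a b, key b a]
    push_cast
    rw [← Finset.sum_sub_distrib]
    have : ∀ p ∈ (Finset.univ : Finset (C × C)),
        ((if h : p.1 = p.2 then (0 : ℕ)
            else (f p.1 p.2).toNat * countPref (block e p.1 p.2 h) a b : ℕ) : ℤ)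
          - ((if h : p.1 = p.2 then (0 : ℕ)
            else (f p.1 p.2).toNat * countPref (block e p.1 p.2 h) b a : ℕ) : ℤ)
        = (if p = (a, b) then 2 * ((f a b).toNat : ℤ) else 0)
          + (if p = (b, a) then -(2 * ((f b a).toNat : ℤ)) else 0) := by
      intro p _
      by_cases h : p.1 = p.2
      · have h1 : p ≠ (a, b) := by
          intro hp; rw [hp] at h; exact hab h
        have h2 : p ≠ (b, a) := by
          intro hp; rw [hp] at h; exact hab h.symm
        simp [h, h1, h2]
      · by_cases h1 : p = (a, b)
        · subst h1
          simp only [h, dif_neg, not_false_iff]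
          rw [countPref_block_self, countPref_block_rev]
          have h2 : ((a, b) : C × C) ≠ (b, a) := by
            intro hp; exact hab (congrArg Prod.fst hp)
          simp [h2]
          push_cast; ring
        · by_cases h2 : p = (b, a)
          · subst h2
            simp only [h, dif_neg, not_false_iff]
            rw [countPref_block_self, countPref_block_rev]
            simp [h1]
            push_cast; ring
          · have ha1 : ¬(a = p.1 ∧ b = p.2) := by
              rintro ⟨u, v⟩; exact h1 (by rw [Prod.ext_iff]; exact ⟨u.symm, v.symm⟩)
            have ha2 : ¬(a = p.2 ∧ b = p.1) := by
              rintro ⟨u, v⟩; exact h2 (by rw [Prod.ext_iff]; exact ⟨v.symm, u.symm⟩)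
            have hb1 : ¬(b = p.1 ∧ a = p.2) := by
              rintro ⟨u, v⟩; exact ha2 ⟨v, u⟩
            have hb2 : ¬(b = p.2 ∧ a = p.1) := by
              rintro ⟨u, v⟩; exact ha1 ⟨v, u⟩
            simp only [h, dif_neg, not_false_iff]
            rw [countPref_block_other e p.1 p.2 h a b hab ha1 ha2,
              countPref_block_other e p.1 p.2 h b a (Ne.symm hab) hb1 hb2]
            simp [h1, h2]
    rw [Finset.sum_congr rfl this, Finset.sum_add_distrib]
    rw [Finset.sum_ite_eq' Finset.univ (a, b), Finset.sum_ite_eq' Finset.univ (b, a)]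
    simp
    ring
  have hs := hskew a b
  refine ⟨fun h => ?_, fun h => ?_, fun h => ?_⟩ <;> omega
end

section
/- Let E = (C,V) be an election with C = {c_1,...,c_n}, let α ∈ [0,1] be rational, let t_i be the number of head-to-head ties of c_i in E, and let k_1,...,k_n be integers with 0 ≤ k_i ≤ n. Then there exists an election E' = (C ∪ D, V') with D = {d_1,...,d_{2n²}} disjoint from C such that for each i, the Copeland^α score of c_i in E' is 2n² − k_i + α·t_i, and for each j, the Copeland^α score of d_j in E' is at most n² + 1. -/
/-- Number of head-to-head ties of candidate `c` in the election on all of `C`. -/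
def tiesCount {C : Type} [Fintype C] [DecidableEq C] (V : List (Vote C)) (c : C) : ℕ :=
  ((Finset.univ.erase c).filter fun d => countPref V c d = countPref V d c).card

section McGarvey

variable {C : Type} [Fintype C] [DecidableEq C]

def keyVote (key : C → ℕ) (hkey : Function.Injective key) : Vote C where
  pref a b := decide (key a < key b)
  asymm a b hab := by
    have hne : key a ≠ key b := fun h => hab (hkey h)
    by_cases h : key a < key b
    · have h2 : ¬ key b < key a := by omega
      simp [h, h2]
    · have h2 : key b < key a := by omega
      simp [h, h2]
  irrefl a := by simp
  trans a b c h1 h2 := by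
    simp only [decide_eq_true_eq] at *
    omega

noncomputable def key1 (a b x : C) : ℕ :=
  if x = a then 0 else if x = b then 1 else (Fintype.equivFin C x : ℕ) + 2

noncomputable def key2 (a b x : C) : ℕ :=
  if x = a then Fintype.card C else if x = b then Fintype.card C + 1
  else Fintype.card C - 1 - (Fintype.equivFin C x : ℕ)

lemma key1_inj (a b : C) : Function.Injective (key1 a b) := by
  intro x y h
  have hx := (Fintype.equivFin C x).isLt
  have hy := (Fintype.equivFin C y).isLt
  unfold key1 at h
  split_ifs at h <;>
    first
      | omega
      | (subst_vars; rfl)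
      | exact (Fintype.equivFin C).injective (Fin.val_injective (by omega))

lemma key2_inj (a b : C) : Function.Injective (key2 a b) := by
  intro x y h
  have hx := (Fintype.equivFin C x).isLt
  have hy := (Fintype.equivFin C y).isLt
  unfold key2 at h
  split_ifs at h <;>
    first
      | omega
      | (subst_vars; rfl)
      | exact (Fintype.equivFin C).injective (Fin.val_injective (by omega))

noncomputable def pairVotes (a b : C) : List (Vote C) :=
  [keyVote (key1 a b) (key1_inj a b), keyVote (key2 a b) (key2_inj a b)]

lemma countPref_pair (a b x y : C) :
    countPref (pairVotes a b) x y =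
      (if key1 a b x < key1 a b y then 1 else 0) +
        (if key2 a b x < key2 a b y then 1 else 0) := by
  simp [countPref, pairVotes, keyVote, List.countP_cons]
  split_ifs <;> simp

lemma pair_margin (a b x y : C) (hab : a ≠ b) (hxy : x ≠ y) :
    (countPref (pairVotes a b) x y : ℤ) - (countPref (pairVotes a b) y x : ℤ)
      = (if (x, y) = (a, b) then 2 else 0) + (if (y, x) = (a, b) then -2 else 0) := by
  rw [countPref_pair, countPref_pair]
  have hx := (Fintype.equivFin C x).isLt
  have hy := (Fintype.equivFin C y).isLt
  have hexy : ((Fintype.equivFin C) x : ℕ) ≠ ((Fintype.equivFin C) y : ℕ) :=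
    fun h => hxy ((Fintype.equivFin C).injective (Fin.val_injective h))
  simp only [key1, key2, Prod.mk.injEq]
  by_cases hxa : x = a <;> by_cases hya : y = a <;> by_cases hxb : x = b <;> by_cases hyb : y = b <;>
    simp_all <;> split_ifs <;> omega



open Classical in
noncomputable def mcgarvey (w : C → C → Prop) : List (Vote C) :=
  (((Finset.univ ×ˢ Finset.univ).filter fun p : C × C => w p.1 p.2).toList).flatMap
    fun p => pairVotes p.1 p.2

open Classical in
lemma mcgarvey_margin (w : C → C → Prop) (hirr : ∀ a, ¬ w a a)
    (x y : C) (hxy : x ≠ y) :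
    (countPref (mcgarvey w) x y : ℤ) - (countPref (mcgarvey w) y x : ℤ)
      = (if w x y then 2 else 0) + (if w y x then -2 else 0) := by
  have hcount : ∀ u v : C, countPref (mcgarvey w) u v
      = ∑ p ∈ (Finset.univ ×ˢ Finset.univ).filter (fun p : C × C => w p.1 p.2),
          countPref (pairVotes p.1 p.2) u v := by
    intro u v
    unfold mcgarvey countPref
    rw [List.countP_flatMap]
    rw [← Finset.sum_map_toList]
    rfl
  rw [hcount, hcount]
  rw [Nat.cast_sum, Nat.cast_sum, ← Finset.sum_sub_distrib]
  have hterm : ∀ p ∈ (Finset.univ ×ˢ Finset.univ).filter (fun p : C × C => w p.1 p.2),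
      (countPref (pairVotes p.1 p.2) x y : ℤ) - (countPref (pairVotes p.1 p.2) y x : ℤ)
        = (if p = (x, y) then 2 else 0) + (if p = (y, x) then -2 else 0) := by
    intro p hp
    have hw : w p.1 p.2 := (Finset.mem_filter.mp hp).2
    have hab : p.1 ≠ p.2 := fun h => hirr p.2 (h ▸ hw)
    have := pair_margin p.1 p.2 x y hab hxy
    rw [this]
    obtain ⟨a, b⟩ := p
    congr 1 <;> · congr 1; apply propext; constructor <;> (intro h; simp_all [Prod.ext_iff])
  rw [Finset.sum_congr rfl hterm, Finset.sum_add_distrib,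
    Finset.sum_ite_eq' _ (x, y) (fun _ => (2 : ℤ)),
    Finset.sum_ite_eq' _ (y, x) (fun _ => (-2 : ℤ))]
  simp [Finset.mem_filter]

open Classical in
lemma points_mcgarvey (w : C → C → Prop) (hirr : ∀ a, ¬ w a a)
    (hasym : ∀ a b, w a b → ¬ w b a) (α : ℚ) (x y : C) (hxy : x ≠ y) :
    points α (mcgarvey w) x y = if w x y then 1 else if w y x then 0 else α := by
  have h := mcgarvey_margin w hirr x y hxy
  unfold points
  by_cases h1 : w x y <;> by_cases h2 : w y x
  · exact absurd h2 (hasym _ _ h1)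
  · simp only [if_pos h1, if_neg h2] at h ⊢
    rw [if_pos (by omega)]
  · simp only [if_neg h1, if_pos h2] at h ⊢
    rw [if_neg (by omega), if_neg (by omega)]
  · simp only [if_neg h1, if_neg h2] at h ⊢
    rw [if_neg (by omega), if_pos (by omega)]

end McGarvey

lemma points_self {C : Type} (α : ℚ) (V : List (Vote C)) (c : C) : points α V c c = α := by
  simp [points]

/-- construction lemma: given an election `E` on `n` candidates with tie counts
`t_i`, and integers `0 ≤ k_i ≤ n`, there is an election on the `n` original candidates plus
`2n²` padding candidates in which candidate `c_i` has Copeland^α score `2n² − k_i + α·t_i`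
and every padding candidate has score at most `n² + 1`. -/
theorem construction_lemma (n : ℕ) (α : ℚ) (h0 : 0 ≤ α) (h1 : α ≤ 1)
    (V : List (Vote (Fin n))) (k : Fin n → ℕ) (hk : ∀ i, k i ≤ n) :
    ∃ V' : List (Vote (Fin n ⊕ Fin (2 * n ^ 2))),
      (∀ i : Fin n,
        score α Finset.univ V' (Sum.inl i)
          = 2 * (n : ℚ) ^ 2 - (k i : ℚ) + α * (tiesCount V i : ℚ)) ∧
      (∀ j : Fin (2 * n ^ 2),
        score α Finset.univ V' (Sum.inr j) ≤ (n : ℚ) ^ 2 + 1) := by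
  classical
  set wins : Fin n → ℕ := fun i =>
    ((Finset.univ.erase i).filter fun a => countPref V a i < countPref V i a).card with hwins_def
  set len : Fin n → ℕ := fun i => k i + wins i with hlen_def
  set s : Fin n → ℕ := fun i => ∑ i' ∈ Finset.Iio i, len i' with hs_def
  have hwins_le : ∀ i, wins i + 1 ≤ n := by
    intro i
    have h2 : wins i ≤ (Finset.univ.erase i).card := Finset.card_filter_le _ _
    rw [Finset.card_erase_of_mem (Finset.mem_univ i), Finset.card_univ, Fintype.card_fin] at h2
    have : 1 ≤ n := Nat.one_le_iff_ne_zero.mpr (by rintro rfl; exact i.elim0)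
    omega
  have hlen_le : ∀ i, len i ≤ 2 * n - 1 := by
    intro i
    have := hwins_le i
    have := hk i
    simp only [hlen_def]
    omega
  have hsl : ∀ i : Fin n, s i + len i ≤ 2 * n ^ 2 := by
    intro i
    have h2 : s i + len i = ∑ i' ∈ insert i (Finset.Iio i), len i' := by
      rw [Finset.sum_insert (by simp)]
      simp only [hs_def]; ring
    have h3 : ∑ i' ∈ insert i (Finset.Iio i), len i' ≤ ∑ i' : Fin n, len i' :=
      Finset.sum_le_sum_of_subset (Finset.subset_univ _)
    have h4 : ∑ i' : Fin n, len i' ≤ ∑ _i' : Fin n, (2 * n - 1) :=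
      Finset.sum_le_sum fun i' _ => hlen_le i'
    have h5 : ∑ _i' : Fin n, (2 * n - 1) = n * (2 * n - 1) := by
      rw [Finset.sum_const, Finset.card_univ, Fintype.card_fin, smul_eq_mul]
    have h6 : n * (2 * n - 1) ≤ 2 * n ^ 2 := by
      have : n * (2 * n - 1) ≤ n * (2 * n) := Nat.mul_le_mul_left n (by omega)
      have h7 : n * (2 * n) = 2 * n ^ 2 := by ring
      omega
    omega
  set beats : Fin (2 * n ^ 2) → Fin n → Prop := fun j i =>
    s i ≤ (j : ℕ) ∧ (j : ℕ) < s i + len i with hbeats_def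
  have hdisj : ∀ (i i' : Fin n) (j : Fin (2 * n ^ 2)), beats j i → beats j i' → i = i' := by
    have key : ∀ i i' : Fin n, i < i' → s i + len i ≤ s i' := by
      intro i i' hlt
      have h2 : s i + len i = ∑ i'' ∈ insert i (Finset.Iio i), len i'' := by
        rw [Finset.sum_insert (by simp)]
        simp only [hs_def]; ring
      have h3 : insert i (Finset.Iio i) ⊆ Finset.Iio i' := by
        intro x hx
        simp only [Finset.mem_insert, Finset.mem_Iio] at hx ⊢
        rcases hx with rfl | hx
        · exact hlt
        · exact lt_trans hx hlt
      rw [h2]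
      exact Finset.sum_le_sum_of_subset h3
    intro i i' j h h'
    rcases lt_trichotomy i i' with hlt | he | hlt
    · exfalso; have := key i i' hlt
      simp only [hbeats_def] at h h'; omega
    · exact he
    · exfalso; have := key i' i hlt
      simp only [hbeats_def] at h h'; omega
  set w : (Fin n ⊕ Fin (2 * n ^ 2)) → (Fin n ⊕ Fin (2 * n ^ 2)) → Prop := fun x y =>
    match x, y with
    | .inl i, .inl i' => countPref V i' i < countPref V i i'
    | .inl i, .inr j => ¬ beats j i
    | .inr j, .inl i => beats j i
    | .inr j, .inr m => ((j : ℕ) < (m : ℕ) ∧ (m : ℕ) - (j : ℕ) ≤ n ^ 2 - 1)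
        ∨ ((m : ℕ) < (j : ℕ) ∧ n ^ 2 + 1 ≤ (j : ℕ) - (m : ℕ)) with hw_def
  have hirr : ∀ x, ¬ w x x := by
    rintro (i | j) h <;> simp only [hw_def] at h
    · omega
    · omega
  have hasym : ∀ x y, w x y → ¬ w y x := by
    rintro (i | j) (i' | m) h h' <;> simp only [hw_def] at h h' <;> omega
  have hpts := points_mcgarvey w hirr hasym α
  refine ⟨mcgarvey w, ?_, ?_⟩
  · intro i
    have hA : ∑ i' : Fin n, points α (mcgarvey w) (Sum.inl i) (Sum.inl i')
        = α + ((wins i : ℚ) + α * (tiesCount V i : ℚ)) := by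
      have hself : points α (mcgarvey w) (Sum.inl i) (Sum.inl i) = α := points_self α _ _
      have hsplit : ∑ i' ∈ Finset.univ.erase i, points α (mcgarvey w) (Sum.inl i) (Sum.inl i')
          = (∑ i' : Fin n, points α (mcgarvey w) (Sum.inl i) (Sum.inl i'))
            - points α (mcgarvey w) (Sum.inl i) (Sum.inl i) :=
        Finset.sum_erase_eq_sub (Finset.mem_univ i)
      have hpp : ∀ i' ∈ Finset.univ.erase i,
          points α (mcgarvey w) (Sum.inl i) (Sum.inl i') = points α V i i' := by
        intro i' hi'
        have hne : (Sum.inl i : Fin n ⊕ Fin (2 * n ^ 2)) ≠ Sum.inl i' := by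
          simp only [ne_eq, Sum.inl.injEq]
          exact fun h => (Finset.mem_erase.mp hi').1 h.symm
        rw [hpts _ _ hne]
        simp only [hw_def]
        unfold points
        split_ifs <;> first | rfl | (exfalso; omega)
      have hscoreV : ∑ i' ∈ Finset.univ.erase i, points α V i i'
          = (wins i : ℚ) + α * (tiesCount V i : ℚ) := by
        have hptform : ∀ a ∈ Finset.univ.erase i, points α V i a
            = (if countPref V a i < countPref V i a then (1 : ℚ) else 0)
              + α * (if countPref V i a = countPref V a i then (1 : ℚ) else 0) := by
          intro a _
          unfold points
          split_ifs <;> first | ring1 | (exfalso; omega)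
        rw [Finset.sum_congr rfl hptform, Finset.sum_add_distrib, Finset.sum_boole,
          ← Finset.mul_sum, Finset.sum_boole]
        rfl
      rw [Finset.sum_congr rfl hpp, hscoreV] at hsplit
      rw [hself] at hsplit
      linarith [hsplit]
    have hB : ∑ j : Fin (2 * n ^ 2), points α (mcgarvey w) (Sum.inl i) (Sum.inr j)
        = (2 * n ^ 2 - len i : ℚ) := by
      have hpp : ∀ j : Fin (2 * n ^ 2),
          points α (mcgarvey w) (Sum.inl i) (Sum.inr j)
            = if ¬ beats j i then (1 : ℚ) else 0 := by
        intro j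
        have hne : (Sum.inl i : Fin n ⊕ Fin (2 * n ^ 2)) ≠ Sum.inr j := by simp
        rw [hpts _ _ hne]
        simp only [hw_def]
        split_ifs <;> first | rfl | tauto
      have hcard_beats : (Finset.univ.filter fun j : Fin (2 * n ^ 2) => beats j i).card
          = len i := by
        have hbij : (Finset.univ.filter fun j : Fin (2 * n ^ 2) => beats j i).card
            = (Finset.Ico (s i) (s i + len i)).card := by
          refine Finset.card_bij (fun j _ => (j : ℕ)) ?_ ?_ ?_
          · intro a ha
            have hb := (Finset.mem_filter.mp ha).2
            simp only [hbeats_def] at hb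
            exact Finset.mem_Ico.mpr hb
          · intro a _ b _ hab
            exact Fin.val_injective hab
          · intro b hb
            rw [Finset.mem_Ico] at hb
            have hlt : b < 2 * n ^ 2 := lt_of_lt_of_le hb.2 (hsl i)
            refine ⟨⟨b, hlt⟩, ?_, rfl⟩
            simp only [Finset.mem_filter, Finset.mem_univ, true_and, hbeats_def]
            exact hb
        rw [hbij, Nat.card_Ico]
        omega
      have hcard_not : (Finset.univ.filter fun j : Fin (2 * n ^ 2) => ¬ beats j i).card
          = 2 * n ^ 2 - len i := by
        have := Finset.card_filter_add_card_filter_not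
          (s := (Finset.univ : Finset (Fin (2 * n ^ 2)))) (p := fun j => beats j i)
        rw [Finset.card_univ, Fintype.card_fin, hcard_beats] at this
        omega
      rw [Finset.sum_congr rfl (fun j _ => hpp j), Finset.sum_boole, hcard_not]
      have hle : len i ≤ 2 * n ^ 2 := le_trans (Nat.le_add_left _ _) (hsl i)
      push_cast [Nat.cast_sub hle]
      ring
    rw [score]
    rw [Finset.sum_erase_eq_sub (Finset.mem_univ _)]
    rw [Fintype.sum_sum_type]
    rw [hA, hB, points_self]
    have hlen_cast : (len i : ℚ) = (k i : ℚ) + (wins i : ℚ) := by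
      simp only [hlen_def]; push_cast; ring
    rw [hlen_cast]
    ring
  · intro j
    have hb1 : ∀ x ∈ Finset.univ.erase (Sum.inr j),
        points α (mcgarvey w) (Sum.inr j) x ≤ (if w x (Sum.inr j) then (0 : ℚ) else 1) := by
      intro x hx
      have hne : (Sum.inr j : Fin n ⊕ Fin (2 * n ^ 2)) ≠ x :=
        (Finset.ne_of_mem_erase hx).symm
      rw [hpts _ _ hne]
      by_cases hA : w (Sum.inr j) x <;> by_cases hB : w x (Sum.inr j)
      · exact absurd hB (hasym _ _ hA)
      · simp [hA, hB]
      · simp [hA, hB]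
      · simp [hA, hB]; exact h1
    set F : (Fin n ⊕ Fin (2 * n ^ 2)) → ℕ := Sum.elim (fun _ => 0)
      (fun m => if (j : ℕ) < (m : ℕ) then (m : ℕ) - (j : ℕ)
        else (m : ℕ) + 2 * n ^ 2 - (j : ℕ)) with hF_def
    have hcard : ((Finset.univ.erase (Sum.inr j)).filter
        fun x => ¬ w x (Sum.inr j)).card ≤ n ^ 2 + 1 := by
      have hmaps : ∀ x ∈ (Finset.univ.erase (Sum.inr j)).filter
          (fun x => ¬ w x (Sum.inr j)), F x ∈ Finset.range (n ^ 2 + 1) := by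
        rintro (i | m) hx
        · simp [hF_def, Finset.mem_range]
        · rw [Finset.mem_filter, Finset.mem_erase] at hx
          obtain ⟨⟨hne, -⟩, hnw⟩ := hx
          have hmj : (m : ℕ) ≠ (j : ℕ) := fun h => hne (by rw [Fin.val_injective h])
          simp only [hw_def] at hnw
          have h2 := m.isLt
          have h3 := j.isLt
          simp only [hF_def, Sum.elim_inr, Finset.mem_range]
          split_ifs <;> omega
      have hinj : Set.InjOn F ((Finset.univ.erase (Sum.inr j)).filter
          (fun x => ¬ w x (Sum.inr j)) : Finset (Fin n ⊕ Fin (2 * n ^ 2))) := by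
        rintro (i1 | m1) hx (i2 | m2) hy hF
        · rw [Finset.mem_coe, Finset.mem_filter] at hx hy
          have hb1' : beats j i1 := not_not.mp (by simpa only [hw_def] using hx.2)
          have hb2' : beats j i2 := not_not.mp (by simpa only [hw_def] using hy.2)
          exact congrArg Sum.inl (hdisj i1 i2 j hb1' hb2')
        · exfalso
          simp only [hF_def, Sum.elim_inl, Sum.elim_inr] at hF
          have h2 := m2.isLt
          have h3 := j.isLt
          split_ifs at hF <;> omega
        · exfalso
          simp only [hF_def, Sum.elim_inl, Sum.elim_inr] at hF
          have h2 := m1.isLt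
          have h3 := j.isLt
          split_ifs at hF <;> omega
        · simp only [hF_def, Sum.elim_inr] at hF
          have h2 := m1.isLt
          have h3 := m2.isLt
          have h4 := j.isLt
          refine congrArg Sum.inr (Fin.val_injective ?_)
          split_ifs at hF <;> omega
      have := Finset.card_le_card_of_injOn F hmaps hinj
      rwa [Finset.card_range] at this
    have hsum : ∑ x ∈ Finset.univ.erase (Sum.inr j), (if w x (Sum.inr j) then (0 : ℚ) else 1)
        = (((Finset.univ.erase (Sum.inr j)).filter fun x => ¬ w x (Sum.inr j)).card : ℚ) := by
      rw [← Finset.sum_boole]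
      apply Finset.sum_congr rfl
      intro x _
      by_cases h : w x (Sum.inr j) <;> simp [h]
    calc score α Finset.univ (mcgarvey w) (Sum.inr j)
        ≤ ∑ x ∈ Finset.univ.erase (Sum.inr j), (if w x (Sum.inr j) then (0 : ℚ) else 1) :=
          Finset.sum_le_sum hb1
      _ = (((Finset.univ.erase (Sum.inr j)).filter fun x => ¬ w x (Sum.inr j)).card : ℚ) := hsum
      _ ≤ ((n ^ 2 + 1 : ℕ) : ℚ) := by exact_mod_cast Nat.cast_le.mpr hcard
      _ = (n : ℚ) ^ 2 + 1 := by push_cast; ring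
end

section
/- In a Copeland election restricted to a subcommittee S containing p, at least two distinct candidates h, h' from H (where every member of H defeats every member of F head-to-head, p ∈ F, and h,h' do not tie each other), candidate p is not a winner of the subelection (S,V): whichever of h,h' wins their head-to-head contest has Copeland^α score strictly greater than p's score in S. -/
/-- in a subelection on candidate set `S ⊆ F ∪ H ∪ {r}` containing `p ∈ F` and
two distinct non-tying members `h, h'` of `H`, where every member of `H ∩ S` defeats every
member of `F ∩ S`, whichever of `h, h'` wins their head-to-head contest has Copeland^α score
strictly greater than `p`'s score in `S`; hence `p` is not a winner of `(S, V)`. -/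
theorem two_H_members_block_p {C : Type} [DecidableEq C]
    (α : ℚ) (h0 : 0 ≤ α) (h1 : α ≤ 1)
    (S F H : Finset C) (r p h h' : C) (V : List (Vote C))
    (hS : S ⊆ F ∪ H ∪ {r})
    (hpF : p ∈ F) (hpS : p ∈ S)
    (hhH : h ∈ H) (hh'H : h' ∈ H) (hhS : h ∈ S) (hh'S : h' ∈ S) (hne : h ≠ h')
    (hFH : Disjoint F H) (hrF : r ∉ F) (hrH : r ∉ H)
    (hbeat : ∀ g ∈ S ∩ H, ∀ d ∈ S ∩ F, points α V g d = 1 ∧ points α V d g = 0)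
    (hnotie : points α V h h' = 1 ∨ points α V h' h = 1) :
    (points α V h h' = 1 → score α S V p < score α S V h) ∧
    (points α V h' h = 1 → score α S V p < score α S V h') ∧
    ¬ IsWinner α S V p := by
  have main : ∀ g g' : C, g ∈ H → g' ∈ H → g ∈ S → g' ∈ S → g ≠ g' →
      points α V g g' = 1 → score α S V p < score α S V g := by
    intro g g' hgH hg'H hgS hg'S hgne hwin
    have hpH : p ∉ H := fun hp => (Finset.disjoint_left.mp hFH hpF) hp
    have hgF : g ∉ F := fun hg => (Finset.disjoint_left.mp hFH hg) hgH
    have hg'F : g' ∉ F := fun hg => (Finset.disjoint_left.mp hFH hg) hg'H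
    set n : ℕ := (S ∩ F).card with hn
    have hpSF : p ∈ S ∩ F := Finset.mem_inter.mpr ⟨hpS, hpF⟩
    have hnpos : 1 ≤ n := Finset.card_pos.mpr ⟨p, hpSF⟩
    have pnn : ∀ c d : C, 0 ≤ points α V c d := by
      intro c d; unfold points
      split
      · norm_num
      · split
        · exact h0
        · norm_num
    have ple : ∀ c d : C, points α V c d ≤ 1 := by
      intro c d; unfold points
      split
      · norm_num
      · split
        · exact h1
        · norm_num
    -- upper bound on score p
    have hup : score α S V p ≤ (n : ℚ) := by
      have hsplit := Finset.sum_filter_add_sum_filter_not (S.erase p)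
        (fun d => d ∉ H) (fun d => points α V p d)
      have hzero : ∑ d ∈ (S.erase p).filter (fun d => ¬ d ∉ H),
          points α V p d = 0 := by
        apply Finset.sum_eq_zero
        intro d hd
        have hd' := Finset.mem_filter.mp hd
        have hdH : d ∈ H := not_not.mp hd'.2
        have hdS : d ∈ S := Finset.mem_of_mem_erase hd'.1
        exact (hbeat d (Finset.mem_inter.mpr ⟨hdS, hdH⟩) p hpSF).2
      have hcard : ((S.erase p).filter (fun d => d ∉ H)).card ≤ n := by
        have hsub : (S.erase p).filter (fun d => d ∉ H) ⊆
            insert r ((S ∩ F).erase p) := by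
          intro d hd
          have hd' := Finset.mem_filter.mp hd
          have hdS : d ∈ S := Finset.mem_of_mem_erase hd'.1
          have hdp : d ≠ p := Finset.ne_of_mem_erase hd'.1
          have := hS hdS
          rcases Finset.mem_union.mp this with h2 | h2
          · rcases Finset.mem_union.mp h2 with h3 | h3
            · exact Finset.mem_insert.mpr (Or.inr
                (Finset.mem_erase.mpr ⟨hdp, Finset.mem_inter.mpr ⟨hdS, h3⟩⟩))
            · exact absurd h3 hd'.2
          · exact Finset.mem_insert.mpr (Or.inl (Finset.mem_singleton.mp h2))
        calc ((S.erase p).filter (fun d => d ∉ H)).card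
            ≤ (insert r ((S ∩ F).erase p)).card := Finset.card_le_card hsub
          _ ≤ ((S ∩ F).erase p).card + 1 := Finset.card_insert_le _ _
          _ = (n - 1) + 1 := by rw [Finset.card_erase_of_mem hpSF]
          _ = n := Nat.succ_pred_eq_of_pos hnpos
      have hle1 : ∑ d ∈ (S.erase p).filter (fun d => d ∉ H),
          points α V p d ≤ (n : ℚ) := by
        calc ∑ d ∈ (S.erase p).filter (fun d => d ∉ H), points α V p d
            ≤ ∑ _d ∈ (S.erase p).filter (fun d => d ∉ H), (1 : ℚ) :=
              Finset.sum_le_sum (fun d _ => ple p d)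
          _ = ((S.erase p).filter (fun d => d ∉ H)).card := by
              rw [Finset.sum_const, nsmul_eq_mul, mul_one]
          _ ≤ (n : ℚ) := by exact_mod_cast hcard
      have : score α S V p = ∑ d ∈ (S.erase p).filter (fun d => d ∉ H),
          points α V p d := by
        rw [score, ← hsplit, hzero, add_zero]
      rw [this]; exact hle1
    -- lower bound on score g
    have hlow : (n : ℚ) + 1 ≤ score α S V g := by
      have hg'nF : g' ∉ S ∩ F := fun hgg =>
        hg'F (Finset.mem_inter.mp hgg).2
      have hsub : insert g' (S ∩ F) ⊆ S.erase g := by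
        intro d hd
        rcases Finset.mem_insert.mp hd with rfl | hd
        · exact Finset.mem_erase.mpr ⟨fun hdd => hgne hdd.symm, hg'S⟩
        · refine Finset.mem_erase.mpr ⟨?_, (Finset.mem_inter.mp hd).1⟩
          rintro rfl
          exact hgF (Finset.mem_inter.mp hd).2
      have hsum : ∑ d ∈ insert g' (S ∩ F), points α V g d = (n : ℚ) + 1 := by
        rw [Finset.sum_insert hg'nF, hwin]
        have : ∑ d ∈ S ∩ F, points α V g d = ∑ _d ∈ S ∩ F, (1 : ℚ) :=
          Finset.sum_congr rfl (fun d hd =>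
            (hbeat g (Finset.mem_inter.mpr ⟨hgS, hgH⟩) d hd).1)
        rw [this, Finset.sum_const, nsmul_eq_mul, mul_one]; ring
      calc (n : ℚ) + 1 = ∑ d ∈ insert g' (S ∩ F), points α V g d := hsum.symm
        _ ≤ ∑ d ∈ S.erase g, points α V g d :=
            Finset.sum_le_sum_of_subset_of_nonneg hsub (fun d _ _ => pnn g d)
        _ = score α S V g := rfl
    calc score α S V p ≤ (n : ℚ) := hup
      _ < (n : ℚ) + 1 := by linarith
      _ ≤ score α S V g := hlow
  refine ⟨main h h' hhH hh'H hhS hh'S hne,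
    main h' h hh'H hhH hh'S hhS hne.symm, ?_⟩
  rintro ⟨-, hw⟩
  rcases hnotie with hwin | hwin
  · exact absurd (hw h hhS) (not_le.mpr (main h h' hhH hh'H hhS hh'S hne hwin))
  · exact absurd (hw h' hh'S)
      (not_le.mpr (main h' h hh'H hhH hh'S hhS hne.symm hwin))
end
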